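/- Let X⊂ℝ^n be a nonempty convex compact set, A a d×n real matrix, a∈ℝ^d, x↦M(x) an affine map from ℝ^n to S^d with M(x)⪰0 for all x∈X, G(x)=gᵀx+c an affine function, K a positive integer, and ε∈(0,1). Define Ψ̂₊(f) = max_{x∈X}{ √(2K^{−1}ln(2/ε)·fᵀM(x)f) + fᵀAx − G(x) } + aᵀf and Ψ̂₋(f) = max_{x∈X}{ √(2K^{−1}ln(2/ε)·fᵀM(x)f) − fᵀAx + G(x) } − aᵀf. Then for every f̄∈ℝ^d, setting κ̄ = (1/2)(Ψ̂₋(f̄) − Ψ̂₊(f̄)) and ρ̄ = (1/2)(Ψ̂₊(f̄) + Ψ̂₋(f̄)), the following holds: for every x∈X and every Borel probability distribution P on ℝ^d that is sub-Gaussian with parameters (Ax+a, M(x)), one has Prob_{ω^K∼P^K}{ |(1/K)Σ_{i=1}^K f̄ᵀω_i + κ̄ − G(x)| > ρ̄ } ≤ ε, where P^K is the distribution of K independent draws from P. -/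

import Mathlib

open Matrix MeasureTheory Real
open scoped ENNReal

noncomputable section


lemma lintegral_pi_prod_aux {α : Type*} [MeasurableSpace α] (μ : Measure α)
    [IsProbabilityMeasure μ] {g : α → ℝ≥0∞} (hg : Measurable g) (K : ℕ) :
    ∫⁻ ω, ∏ i : Fin K, g (ω i) ∂(Measure.pi fun _ : Fin K => μ)
      = (∫⁻ x, g x ∂μ) ^ K := by
  induction K with
  | zero => simp
  | succ m ih =>
    have hpres := measurePreserving_piFinSuccAbove (fun _ : Fin (m + 1) => μ) 0
    have key := hpres.lintegral_map_equiv
      (fun p : α × (Fin m → α) => g p.1 * ∏ j : Fin m, g (p.2 j))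
      (MeasurableEquiv.piFinSuccAbove (fun _ : Fin (m+1) => α) 0)
    have heq : ∀ ω : Fin (m+1) → α,
        (g ((MeasurableEquiv.piFinSuccAbove (fun _ : Fin (m+1) => α) 0 ω).1)
          * ∏ j : Fin m, g ((MeasurableEquiv.piFinSuccAbove (fun _ : Fin (m+1) => α) 0 ω).2 j))
        = ∏ i : Fin (m+1), g (ω i) := by
      intro ω
      rw [Fin.prod_univ_succAbove (fun i => g (ω i)) 0]
      rfl
    have hprod : ∫⁻ p : α × (Fin m → α), g p.1 * ∏ j : Fin m, g (p.2 j)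
          ∂(μ.prod (Measure.pi fun _ : Fin m => μ))
        = (∫⁻ x, g x ∂μ) * (∫⁻ ω, ∏ j : Fin m, g (ω j) ∂(Measure.pi fun _ : Fin m => μ)) :=
      lintegral_prod_mul hg.aemeasurable
        (Finset.measurable_prod Finset.univ fun j _ =>
          hg.comp (measurable_pi_apply j)).aemeasurable
    calc ∫⁻ ω, ∏ i : Fin (m+1), g (ω i) ∂(Measure.pi fun _ : Fin (m+1) => μ)
        = ∫⁻ p : α × (Fin m → α), g p.1 * ∏ j : Fin m, g (p.2 j)
            ∂(μ.prod (Measure.pi fun _ : Fin m => μ)) := by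
          rw [key]; exact lintegral_congr fun ω => (heq ω).symm
      _ = (∫⁻ x, g x ∂μ) ^ (m+1) := by rw [hprod, ih]; ring

lemma chernoff_bound {d K : ℕ} (hK : 1 ≤ K) (P : Measure (Fin d → ℝ))
    [IsProbabilityMeasure P] (v : Fin d → ℝ) (m σ2 L : ℝ) (hσ2 : 0 ≤ σ2) (hL : 0 < L)
    (hmgf : ∀ t : ℝ, 0 ≤ t →
      ∫⁻ ω, ENNReal.ofReal (Real.exp (t * (v ⬝ᵥ ω))) ∂P
        ≤ ENNReal.ofReal (Real.exp (t * m + t ^ 2 / 2 * σ2)))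
    (s : ℝ) (hs : m + Real.sqrt (2 * (K : ℝ)⁻¹ * L * σ2) ≤ s) :
    (Measure.pi fun _ : Fin K => P) {ω | s < (K : ℝ)⁻¹ * ∑ i, v ⬝ᵥ ω i}
      ≤ ENNReal.ofReal (Real.exp (-L)) := by
  have hK0 : (0 : ℝ) < (K : ℝ) := by exact_mod_cast hK
  set μ := Measure.pi fun _ : Fin K => P with hμ
  set S : (Fin K → Fin d → ℝ) → ℝ := fun ω => ∑ i, v ⬝ᵥ ω i with hS
  have hvmeas : ∀ i : Fin K, Measurable fun ω : Fin K → Fin d → ℝ => v ⬝ᵥ ω i := by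
    intro i
    simp only [dotProduct]
    refine Finset.measurable_sum Finset.univ fun j _ => Measurable.const_mul ?_ (v j)
    exact (measurable_pi_apply j).comp (measurable_pi_apply i)
  have hSmeas : Measurable S :=
    Finset.measurable_sum Finset.univ fun i _ => hvmeas i
  -- Chernoff for a single threshold
  have claimA : ∀ t : ℝ, 0 ≤ t → ∀ r : ℝ,
      μ {ω | r ≤ S ω} ≤ ENNReal.ofReal (Real.exp (-(t * r) + K * (t * m + t ^ 2 / 2 * σ2))) := by
    intro t ht r
    set g : (Fin d → ℝ) → ℝ≥0∞ := fun y => ENNReal.ofReal (Real.exp (t * (v ⬝ᵥ y))) with hg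
    have hdot : Measurable fun y : Fin d → ℝ => v ⬝ᵥ y := by
      simp only [dotProduct]
      refine Finset.measurable_sum Finset.univ fun j _ => Measurable.const_mul ?_ (v j)
      exact measurable_pi_apply j
    have hgmeas : Measurable g :=
      ENNReal.measurable_ofReal.comp (Real.measurable_exp.comp (hdot.const_mul t))
    have hf : Measurable fun ω : Fin K → Fin d → ℝ => ∏ i : Fin K, g (ω i) :=
      Finset.measurable_prod Finset.univ fun i _ => hgmeas.comp (measurable_pi_apply i)
    have hsub : {ω | r ≤ S ω} ⊆ {ω | ENNReal.ofReal (Real.exp (t * r)) ≤ ∏ i : Fin K, g (ω i)} := by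
      intro ω hw
      simp only [Set.mem_setOf_eq] at hw ⊢
      have hprodeq : (∏ i : Fin K, g (ω i)) = ENNReal.ofReal (Real.exp (t * S ω)) := by
        rw [hg]
        rw [← ENNReal.ofReal_prod_of_nonneg (fun i _ => (Real.exp_pos _).le)]
        congr 1
        rw [← Real.exp_sum]
        congr 1
        rw [hS, Finset.mul_sum]
      rw [hprodeq]
      apply ENNReal.ofReal_le_ofReal
      exact Real.exp_le_exp.2 (mul_le_mul_of_nonneg_left hw ht)
    have hmarkov := mul_meas_ge_le_lintegral₀ (μ := μ) hf.aemeasurable (ENNReal.ofReal (Real.exp (t * r)))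
    have hint : ∫⁻ ω, ∏ i : Fin K, g (ω i) ∂μ
        ≤ ENNReal.ofReal (Real.exp (K * (t * m + t ^ 2 / 2 * σ2))) := by
      rw [hμ, lintegral_pi_prod_aux P hgmeas K]
      calc (∫⁻ y, g y ∂P) ^ K
          ≤ (ENNReal.ofReal (Real.exp (t * m + t ^ 2 / 2 * σ2))) ^ K :=
            pow_le_pow_left' (hmgf t ht) K
        _ = ENNReal.ofReal (Real.exp (t * m + t ^ 2 / 2 * σ2) ^ K) := by
            rw [ENNReal.ofReal_pow (Real.exp_pos _).le]
        _ = ENNReal.ofReal (Real.exp (K * (t * m + t ^ 2 / 2 * σ2))) := by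
            rw [Real.exp_nat_mul]
    have h1 : ENNReal.ofReal (Real.exp (t * r)) * μ {ω | r ≤ S ω}
        ≤ ENNReal.ofReal (Real.exp (K * (t * m + t ^ 2 / 2 * σ2))) :=
      le_trans (mul_le_mul_right (measure_mono hsub) _) (hmarkov.trans hint)
    have hepos : (0 : ℝ≥0∞) < ENNReal.ofReal (Real.exp (t * r)) := by
      simp [Real.exp_pos]
    rw [mul_comm] at h1
    rw [← ENNReal.le_div_iff_mul_le (Or.inl hepos.ne') (Or.inl ENNReal.ofReal_ne_top)] at h1
    refine h1.trans (le_of_eq ?_)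
    rw [← ENNReal.ofReal_div_of_pos (Real.exp_pos _), ← Real.exp_sub]
    ring_nf
  rcases eq_or_lt_of_le hσ2 with hz | hpos
  · -- σ2 = 0
    have hms : m ≤ s := by
      have : Real.sqrt (2 * (K : ℝ)⁻¹ * L * σ2) = 0 := by
        rw [← hz, mul_zero, Real.sqrt_zero]
      linarith [hs, this.symm ▸ hs]
    have hnull : ∀ q : ℕ, μ {ω | K * s + 1 / (q + 1) ≤ S ω} = 0 := by
      intro q
      refine le_antisymm ?_ zero_le
      have hq : (0 : ℝ) < 1 / ((q : ℝ) + 1) := by positivity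
      have key : ∀ t : ℝ, 0 ≤ t →
          μ {ω | K * s + 1 / (q + 1) ≤ S ω} ≤ ENNReal.ofReal (Real.exp (-(t * (1 / (q + 1))))) := by
        intro t ht
        refine (claimA t ht (K * s + 1 / (q + 1))).trans ?_
        apply ENNReal.ofReal_le_ofReal
        apply Real.exp_le_exp.2
        have h2 : (K : ℝ) * (t * m) ≤ K * (t * s) := by
          apply mul_le_mul_of_nonneg_left _ hK0.le
          exact mul_le_mul_of_nonneg_left hms ht
        rw [← hz]
        nlinarith
      have htend : Filter.Tendsto (fun t : ℝ => ENNReal.ofReal (Real.exp (-(t * (1 / (q + 1))))))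
          Filter.atTop (nhds 0) := by
        rw [← ENNReal.ofReal_zero]
        apply ENNReal.tendsto_ofReal
        apply Real.tendsto_exp_atBot.comp
        apply Filter.tendsto_neg_atBot_iff.2
        exact Filter.Tendsto.atTop_mul_const hq Filter.tendsto_id
      exact ge_of_tendsto htend ((Filter.eventually_ge_atTop 0).mono key)
    have hsub2 : {ω | s < (K : ℝ)⁻¹ * ∑ i, v ⬝ᵥ ω i}
        ⊆ ⋃ q : ℕ, {ω | K * s + 1 / (q + 1) ≤ S ω} := by
      intro ω hw
      simp only [Set.mem_setOf_eq] at hw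
      have h3 : K * s < S ω := by
        rw [hS]
        calc (K : ℝ) * s < K * ((K : ℝ)⁻¹ * ∑ i, v ⬝ᵥ ω i) := by
              exact mul_lt_mul_of_pos_left hw hK0
          _ = ∑ i, v ⬝ᵥ ω i := by field_simp
      obtain ⟨q, hq⟩ := exists_nat_one_div_lt (sub_pos.2 h3)
      exact Set.mem_iUnion.2 ⟨q, by simp only [Set.mem_setOf_eq]; push_cast; linarith⟩
    calc μ {ω | s < (K : ℝ)⁻¹ * ∑ i, v ⬝ᵥ ω i} ≤ μ (⋃ q : ℕ, {ω | K * s + 1 / (q + 1) ≤ S ω}) :=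
          measure_mono hsub2
      _ = 0 := measure_iUnion_null hnull
      _ ≤ _ := zero_le
  · -- σ2 > 0
    set t := Real.sqrt (2 * L / (K * σ2)) with htdef
    have ht : 0 ≤ t := Real.sqrt_nonneg _
    have ht2 : t ^ 2 = 2 * L / (K * σ2) := Real.sq_sqrt (by positivity)
    have htsqrt : t * Real.sqrt (2 * (K : ℝ)⁻¹ * L * σ2) = 2 * L / K := by
      rw [htdef, ← Real.sqrt_mul (by positivity)]
      rw [show 2 * L / ((K : ℝ) * σ2) * (2 * (K : ℝ)⁻¹ * L * σ2) = (2 * L / K) ^ 2 by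
        field_simp]
      exact Real.sqrt_sq (by positivity)
    have hsub3 : {ω | s < (K : ℝ)⁻¹ * ∑ i, v ⬝ᵥ ω i} ⊆ {ω | K * s ≤ S ω} := by
      intro ω hw
      simp only [Set.mem_setOf_eq] at hw ⊢
      rw [hS]
      calc (K : ℝ) * s ≤ K * ((K : ℝ)⁻¹ * ∑ i, v ⬝ᵥ ω i) :=
            (mul_le_mul_of_nonneg_left hw.le hK0.le)
        _ = ∑ i, v ⬝ᵥ ω i := by field_simp
    refine (measure_mono hsub3).trans ((claimA t ht (K * s)).trans ?_)
    apply ENNReal.ofReal_le_ofReal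
    apply Real.exp_le_exp.2
    have hKt2 : (K : ℝ) * (t ^ 2 / 2 * σ2) = L := by
      rw [ht2]; field_simp
    have h4 : t * (K * s) ≥ t * (K * (m + Real.sqrt (2 * (K : ℝ)⁻¹ * L * σ2))) := by
      apply mul_le_mul_of_nonneg_left _ ht
      exact mul_le_mul_of_nonneg_left hs hK0.le
    have h5 : t * ((K : ℝ) * (m + Real.sqrt (2 * (K : ℝ)⁻¹ * L * σ2)))
        = t * K * m + (K : ℝ) * (t * Real.sqrt (2 * (K : ℝ)⁻¹ * L * σ2)) := by ring
    rw [htsqrt] at h5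
    have h6 : (K : ℝ) * (2 * L / K) = 2 * L := by field_simp
    nlinarith [hKt2, h4, h5, h6]


/-- `P` is sub-Gaussian with parameters `(θ,Θ)`:
`ln E_{ω∼P}[e^{hᵀω}] ≤ hᵀθ + (1/2)hᵀΘh` for all `h`. -/
def SubGaussianWith {d : ℕ} (θ : Fin d → ℝ) (Θ : Matrix (Fin d) (Fin d) ℝ)
    (P : Measure (Fin d → ℝ)) : Prop :=
  ∀ h : Fin d → ℝ, ∫⁻ ω, ENNReal.ofReal (Real.exp (h ⬝ᵥ ω)) ∂P
    ≤ ENNReal.ofReal (Real.exp (h ⬝ᵥ θ + (1/2) * (h ⬝ᵥ Θ.mulVec h)))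

/-- `Ψ̂₊(f)` of Proposition 3.4. -/
def PsiSGPlus {d n : ℕ} (X : Set (Fin n → ℝ)) (A : Matrix (Fin d) (Fin n) ℝ)
    (a : Fin d → ℝ) (M : (Fin n → ℝ) →ᵃ[ℝ] Matrix (Fin d) (Fin d) ℝ)
    (g : Fin n → ℝ) (c : ℝ) (K : ℕ) (ε : ℝ) (f : Fin d → ℝ) : ℝ :=
  sSup ((fun x => Real.sqrt (2 * (K : ℝ)⁻¹ * Real.log (2/ε) * (f ⬝ᵥ (M x).mulVec f))
      + f ⬝ᵥ A.mulVec x - (g ⬝ᵥ x + c)) '' X) + a ⬝ᵥ f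

/-- `Ψ̂₋(f)` of Proposition 3.4. -/
def PsiSGMinus {d n : ℕ} (X : Set (Fin n → ℝ)) (A : Matrix (Fin d) (Fin n) ℝ)
    (a : Fin d → ℝ) (M : (Fin n → ℝ) →ᵃ[ℝ] Matrix (Fin d) (Fin d) ℝ)
    (g : Fin n → ℝ) (c : ℝ) (K : ℕ) (ε : ℝ) (f : Fin d → ℝ) : ℝ :=
  sSup ((fun x => Real.sqrt (2 * (K : ℝ)⁻¹ * Real.log (2/ε) * (f ⬝ᵥ (M x).mulVec f))
      - f ⬝ᵥ A.mulVec x + (g ⬝ᵥ x + c)) '' X) - a ⬝ᵥ f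

/-- the affine estimate `(1/K)Σᵢ f̄ᵀωᵢ + κ̄` recovers `G(x) = gᵀx + c`
from `K` i.i.d. sub-Gaussian observations with ε-risk at most
`ρ̄ = (1/2)(Ψ̂₊(f̄)+Ψ̂₋(f̄))`. -/
theorem statement15 {d n : ℕ}
    (X : Set (Fin n → ℝ)) (hXne : X.Nonempty) (hXconv : Convex ℝ X)
    (hXcpt : IsCompact X)
    (A : Matrix (Fin d) (Fin n) ℝ) (a : Fin d → ℝ)
    (M : (Fin n → ℝ) →ᵃ[ℝ] Matrix (Fin d) (Fin d) ℝ)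
    (hMsym : ∀ x, (M x).IsSymm) (hMpsd : ∀ x ∈ X, (M x).PosSemidef)
    (g : Fin n → ℝ) (c : ℝ) (K : ℕ) (hK : 1 ≤ K)
    (ε : ℝ) (hε0 : 0 < ε) (hε1 : ε < 1)
    (fbar : Fin d → ℝ)
    (κbar ρbar : ℝ)
    (hκ : κbar = (1/2) * (PsiSGMinus X A a M g c K ε fbar
                          - PsiSGPlus X A a M g c K ε fbar))
    (hρ : ρbar = (1/2) * (PsiSGPlus X A a M g c K ε fbar
                          + PsiSGMinus X A a M g c K ε fbar))
    (x : Fin n → ℝ) (hx : x ∈ X)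
    (P : Measure (Fin d → ℝ)) [IsProbabilityMeasure P]
    (hP : SubGaussianWith (A.mulVec x + a) (M x) P) :
    (Measure.pi fun _ : Fin K => P)
        {ω | ρbar < |(K : ℝ)⁻¹ * ∑ i, fbar ⬝ᵥ ω i + κbar - (g ⬝ᵥ x + c)|}
      ≤ ENNReal.ofReal ε := by
  classical
  have hK0 : (0 : ℝ) < (K : ℝ) := by exact_mod_cast hK
  have hL : 0 < Real.log (2 / ε) := Real.log_pos (by rw [lt_div_iff₀ hε0]; nlinarith)
  set L : ℝ := Real.log (2 / ε) with hLdef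
  have hexpL : Real.exp (-L) = ε / 2 := by
    rw [hLdef, Real.exp_neg, Real.exp_log (by positivity), inv_div]
  set σ2 : ℝ := fbar ⬝ᵥ (M x).mulVec fbar with hσ2def
  have hσ2 : 0 ≤ σ2 := by simpa using (hMpsd x hx).dotProduct_mulVec_nonneg fbar
  -- MGF bounds from sub-Gaussianity
  have hmgfgen : ∀ (u : Fin d → ℝ) (t : ℝ),
      ∫⁻ ω, ENNReal.ofReal (Real.exp (t * (u ⬝ᵥ ω))) ∂P
        ≤ ENNReal.ofReal (Real.exp (t * (u ⬝ᵥ (A.mulVec x + a))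
            + t ^ 2 / 2 * (u ⬝ᵥ (M x).mulVec u))) := by
    intro u t
    have h := hP (t • u)
    simp only [smul_dotProduct, Matrix.mulVec_smul, dotProduct_smul, smul_eq_mul] at h
    have he : t * (u ⬝ᵥ (A.mulVec x + a)) + 1 / 2 * (t * (t * (u ⬝ᵥ (M x).mulVec u)))
        = t * (u ⬝ᵥ (A.mulVec x + a)) + t ^ 2 / 2 * (u ⬝ᵥ (M x).mulVec u) := by ring
    rw [he] at h
    exact h
  -- continuity facts
  have hMcont : Continuous M := by
    rw [AffineMap.decomp M]
    exact (M.linear.continuous_of_finiteDimensional).add continuous_const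
  have hquad : Continuous fun B : Matrix (Fin d) (Fin d) ℝ => fbar ⬝ᵥ B.mulVec fbar := by
    simp only [dotProduct, Matrix.mulVec]
    refine continuous_finset_sum _ fun i _ => Continuous.mul continuous_const ?_
    refine continuous_finset_sum _ fun j _ => Continuous.mul ?_ continuous_const
    exact (continuous_apply j).comp (continuous_apply i)
  have hlin : ∀ w : Fin n → ℝ, Continuous fun y : Fin n → ℝ => w ⬝ᵥ y := by
    intro w
    simp only [dotProduct]
    exact continuous_finset_sum _ fun j _ => Continuous.mul continuous_const (continuous_apply j)
  have hAx : Continuous fun y : Fin n → ℝ => fbar ⬝ᵥ A.mulVec y := by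
    simp only [dotProduct_mulVec]
    exact hlin _
  set φp : (Fin n → ℝ) → ℝ := fun y =>
    Real.sqrt (2 * (K : ℝ)⁻¹ * Real.log (2/ε) * (fbar ⬝ᵥ (M y).mulVec fbar))
      + fbar ⬝ᵥ A.mulVec y - (g ⬝ᵥ y + c) with hφpdef
  set φm : (Fin n → ℝ) → ℝ := fun y =>
    Real.sqrt (2 * (K : ℝ)⁻¹ * Real.log (2/ε) * (fbar ⬝ᵥ (M y).mulVec fbar))
      - fbar ⬝ᵥ A.mulVec y + (g ⬝ᵥ y + c) with hφmdef
  have hφpc : Continuous φp :=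
    ((Real.continuous_sqrt.comp (continuous_const.mul (hquad.comp hMcont))).add hAx).sub
      ((hlin g).add continuous_const)
  have hφmc : Continuous φm :=
    ((Real.continuous_sqrt.comp (continuous_const.mul (hquad.comp hMcont))).sub hAx).add
      ((hlin g).add continuous_const)
  have hbp : φp x ≤ sSup (φp '' X) :=
    le_csSup (hXcpt.bddAbove_image hφpc.continuousOn) ⟨x, hx, rfl⟩
  have hbm : φm x ≤ sSup (φm '' X) :=
    le_csSup (hXcpt.bddAbove_image hφmc.continuousOn) ⟨x, hx, rfl⟩
  have hΨp : PsiSGPlus X A a M g c K ε fbar = sSup (φp '' X) + a ⬝ᵥ fbar := rfl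
  have hΨm : PsiSGMinus X A a M g c K ε fbar = sSup (φm '' X) - a ⬝ᵥ fbar := rfl
  set Ψp := PsiSGPlus X A a M g c K ε fbar with hΨpdef
  set Ψm := PsiSGMinus X A a M g c K ε fbar with hΨmdef
  set G : ℝ := g ⬝ᵥ x + c with hGdef
  have hdotθ : fbar ⬝ᵥ (A.mulVec x + a) = fbar ⬝ᵥ A.mulVec x + a ⬝ᵥ fbar := by
    rw [dotProduct_add, dotProduct_comm fbar a]
  -- the two tail bounds
  have htail1 : (Measure.pi fun _ : Fin K => P)
      {ω | Ψp + G < (K : ℝ)⁻¹ * ∑ i, fbar ⬝ᵥ ω i} ≤ ENNReal.ofReal (Real.exp (-L)) := by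
    refine chernoff_bound hK P fbar (fbar ⬝ᵥ (A.mulVec x + a)) σ2 L hσ2 hL
      (fun t _ => hmgfgen fbar t) (Ψp + G) ?_
    have h1 : φp x = Real.sqrt (2 * (K : ℝ)⁻¹ * L * σ2) + fbar ⬝ᵥ A.mulVec x - G := rfl
    have h2 := hbp
    rw [h1] at h2
    rw [hdotθ, hΨp]
    linarith
  have hσ2neg : (-fbar) ⬝ᵥ (M x).mulVec (-fbar) = σ2 := by
    rw [Matrix.mulVec_neg, dotProduct_neg, neg_dotProduct, neg_neg]
  have htail2 : (Measure.pi fun _ : Fin K => P)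
      {ω | Ψm - G < (K : ℝ)⁻¹ * ∑ i, (-fbar) ⬝ᵥ ω i} ≤ ENNReal.ofReal (Real.exp (-L)) := by
    refine chernoff_bound hK P (-fbar) ((-fbar) ⬝ᵥ (A.mulVec x + a)) σ2 L hσ2 hL
      (fun t _ => ?_) (Ψm - G) ?_
    · have := hmgfgen (-fbar) t
      rwa [hσ2neg] at this
    · have h1 : φm x = Real.sqrt (2 * (K : ℝ)⁻¹ * L * σ2) - fbar ⬝ᵥ A.mulVec x + G := rfl
      have h2 := hbm
      rw [h1] at h2
      rw [neg_dotProduct, hdotθ, hΨm]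
      linarith
  -- event inclusion
  have hsplit : {ω : Fin K → Fin d → ℝ | ρbar < |(K : ℝ)⁻¹ * ∑ i, fbar ⬝ᵥ ω i + κbar - G|}
      ⊆ {ω : Fin K → Fin d → ℝ | Ψp + G < (K : ℝ)⁻¹ * ∑ i, fbar ⬝ᵥ ω i}
        ∪ {ω : Fin K → Fin d → ℝ | Ψm - G < (K : ℝ)⁻¹ * ∑ i, (-fbar) ⬝ᵥ ω i} := by
    intro ω hw
    simp only [Set.mem_setOf_eq, Set.mem_union] at hw ⊢
    have hsum : (K : ℝ)⁻¹ * ∑ i, (-fbar) ⬝ᵥ ω i = -((K : ℝ)⁻¹ * ∑ i, fbar ⬝ᵥ ω i) := by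
      simp only [neg_dotProduct, Finset.sum_neg_distrib, mul_neg]
    rcases lt_abs.1 hw with h | h
    · left
      rw [hκ, hρ] at h
      linarith
    · right
      rw [hsum]
      rw [hκ, hρ] at h
      linarith
  refine le_trans (measure_mono hsplit) (le_trans (measure_union_le _ _) ?_)
  refine le_trans (add_le_add htail1 htail2) ?_
  rw [hexpL, ← ENNReal.ofReal_add (by positivity) (by positivity)]
  norm_num

end
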